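/- Let k ≥ 2 be an integer and let B be a symmetric k-linear form on V. Then the following are equivalent: (1) B is trace-free; (2) the k-linear form J•B defined by (J•B)(v₁,v₂,…,v_k) = B(Jv₁, v₂,…,v_k) is symmetric; (3) B(Jv₁, Jv₂, v₃,…,v_k) = −B(v₁, v₂, v₃,…,v_k) for all v₁,…,v_k ∈ V. -/

import Mathlib

open scoped BigOperators

/-- Let `V` be a 2-dimensional real inner product space with orthonormal basis `e`,
`J : V → V` linear with `J∘J = -id` preserving the inner product, and let `B` be a
symmetric `k`-linear form on `V` (here `k = n + 2 ≥ 2`). Then the following are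
equivalent: (1) `B` is trace-free; (2) the form `J•B : (v₁,…,v_k) ↦ B(Jv₁,v₂,…,v_k)`
is symmetric; (3) `B(Jv₁, Jv₂, v₃,…,v_k) = -B(v₁,…,v_k)` for all `v₁,…,v_k`. -/
theorem stmt3 {V : Type*} [NormedAddCommGroup V] [InnerProductSpace ℝ V]
    (e : OrthonormalBasis (Fin 2) ℝ V) (J : V →ₗ[ℝ] V)
    (hJ2 : ∀ x : V, J (J x) = -x)
    (hJinner : ∀ x y : V, (inner ℝ (J x) (J y) : ℝ) = inner ℝ x y)
    (n : ℕ)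
    (B : MultilinearMap ℝ (fun _ : Fin (n + 2) => V) ℝ)
    (hBsymm : ∀ (σ : Equiv.Perm (Fin (n + 2))) (v : Fin (n + 2) → V), B (v ∘ σ) = B v) :
    ((∀ v : Fin n → V, ∑ i : Fin 2, B (Fin.cons (e i) (Fin.cons (e i) v)) = 0)
      ↔ (∀ (σ : Equiv.Perm (Fin (n + 2))) (v : Fin (n + 2) → V),
          B (Function.update (v ∘ σ) 0 (J ((v ∘ σ) 0)))
            = B (Function.update v 0 (J (v 0)))))
    ∧ ((∀ v : Fin n → V, ∑ i : Fin 2, B (Fin.cons (e i) (Fin.cons (e i) v)) = 0)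
      ↔ (∀ (x y : V) (v : Fin n → V),
          B (Fin.cons (J x) (Fin.cons (J y) v)) = - B (Fin.cons x (Fin.cons y v)))) := by
  classical
  -- basic inner product facts
  have hinner : ∀ i j : Fin 2, (inner ℝ (e i) (e j) : ℝ) = if i = j then 1 else 0 :=
    orthonormal_iff_ite.mp e.orthonormal
  have hJx0 : ∀ x : V, (inner ℝ (J x) x : ℝ) = 0 := by
    intro x
    have h := hJinner (J x) x
    rw [hJ2] at h
    have h2 : (inner ℝ (-x) (J x) : ℝ) = -inner ℝ (J x) x := by
      rw [inner_neg_left, real_inner_comm]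
    linarith
  set ε : ℝ := (inner ℝ (e 1) (J (e 0)) : ℝ) with hεdef
  have hJe0 : J (e 0) = ε • e 1 := by
    have h := e.sum_repr' (J (e 0))
    rw [Fin.sum_univ_two] at h
    have h0 : (inner ℝ (e 0) (J (e 0)) : ℝ) = 0 := by
      rw [real_inner_comm]; exact hJx0 (e 0)
    rw [h0, zero_smul, zero_add] at h
    exact h.symm
  have hJe1 : J (e 1) = (-ε) • e 0 := by
    have h := e.sum_repr' (J (e 1))
    rw [Fin.sum_univ_two] at h
    have h1 : (inner ℝ (e 1) (J (e 1)) : ℝ) = 0 := by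
      rw [real_inner_comm]; exact hJx0 (e 1)
    have h0 : (inner ℝ (e 0) (J (e 1)) : ℝ) = -ε := by
      have h2 := hJinner (e 0) (J (e 1))
      rw [hJ2, inner_neg_right] at h2
      rw [← h2, real_inner_comm]
    rw [h1, zero_smul, add_zero, h0] at h
    exact h.symm
  have hε2 : ε * ε = 1 := by
    have h := hJinner (e 0) (e 0)
    rw [hJe0, real_inner_smul_left, real_inner_smul_right] at h
    have h11 := hinner 1 1
    have h00 := hinner 0 0
    rw [if_pos rfl] at h11 h00
    rw [h11, h00] at h
    linarith
  -- tuple lemmas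
  have hcons1 : ∀ (x y : V) (m : Fin n → V),
      (Fin.cons x (Fin.cons y m) : Fin (n + 2) → V) 1 = y := by
    intro x y m
    rw [← Fin.succ_zero_eq_one, Fin.cons_succ, Fin.cons_zero]
  have hupd1 : ∀ (x y z : V) (m : Fin n → V),
      Function.update (Fin.cons x (Fin.cons y m)) 1 z
        = (Fin.cons x (Fin.cons z m) : Fin (n + 2) → V) := by
    intro x y z m
    have h := (Fin.cons_update (α := fun _ : Fin (n + 2) => V) (x := x)
      (p := Fin.cons y m) (i := (0 : Fin (n + 1))) (y := z)).symm
    rw [Fin.update_cons_zero, Fin.succ_zero_eq_one] at h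
    exact h
  have hT1add : ∀ (x y z : V) (m : Fin n → V),
      B (Fin.cons x (Fin.cons (y + z) m))
        = B (Fin.cons x (Fin.cons y m)) + B (Fin.cons x (Fin.cons z m)) := by
    intro x y z m
    have h := B.map_update_add (Fin.cons x (Fin.cons y m)) 1 y z
    rwa [hupd1, hupd1, hupd1] at h
  have hT1smul : ∀ (c : ℝ) (x y : V) (m : Fin n → V),
      B (Fin.cons x (Fin.cons (c • y) m)) = c * B (Fin.cons x (Fin.cons y m)) := by
    intro c x y m
    have h := B.map_update_smul (Fin.cons x (Fin.cons y m)) 1 c y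
    rwa [hupd1, hupd1, smul_eq_mul] at h
  have hT1neg : ∀ (x y : V) (m : Fin n → V),
      B (Fin.cons x (Fin.cons (-y) m)) = - B (Fin.cons x (Fin.cons y m)) := by
    intro x y m
    rw [show -y = (-1 : ℝ) • y by rw [neg_one_smul], hT1smul]
    ring
  have hcomp : ∀ (x y : V) (m : Fin n → V),
      (Fin.cons x (Fin.cons y m) : Fin (n + 2) → V) ∘ (Equiv.swap 0 1)
        = Fin.cons y (Fin.cons x m) := by
    intro x y m
    funext i
    refine Fin.cases ?_ (fun j => ?_) i
    · simp only [Function.comp_apply, Equiv.swap_apply_left, Fin.cons_zero]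
      rw [hcons1]
    · refine Fin.cases ?_ (fun k => ?_) j
      · simp only [Function.comp_apply, Fin.succ_zero_eq_one, Equiv.swap_apply_right,
          Fin.cons_zero]
        rw [hcons1]
      · have h2 : Equiv.swap (0 : Fin (n + 2)) 1 k.succ.succ = k.succ.succ :=
          Equiv.swap_apply_of_ne_of_ne (Fin.succ_ne_zero _) (Fin.succ_succ_ne_one k)
        simp only [Function.comp_apply, h2, Fin.cons_succ]
  have hswap : ∀ (x y : V) (m : Fin n → V),
      B (Fin.cons x (Fin.cons y m)) = B (Fin.cons y (Fin.cons x m)) := by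
    intro x y m
    have h := hBsymm (Equiv.swap 0 1) (Fin.cons x (Fin.cons y m))
    rw [hcomp] at h
    exact h.symm
  -- the key permutation lemma
  have L : ∀ (σ : Equiv.Perm (Fin (n + 2))) (v : Fin (n + 2) → V),
      B (Function.update (v ∘ σ) 0 (J ((v ∘ σ) 0)))
        = B (Function.update v (σ 0) (J (v (σ 0)))) := by
    intro σ v
    have hfun : Function.update (v ∘ σ) 0 (J (v (σ 0)))
        = (Function.update v (σ 0) (J (v (σ 0)))) ∘ σ := by
      funext i
      rcases eq_or_ne i 0 with hi | hi
      · subst hi; simp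
      · have hσ : σ i ≠ σ 0 := fun h => hi (σ.injective h)
        simp [Function.update_of_ne hi, Function.comp, Function.update_of_ne hσ]
    calc B (Function.update (v ∘ σ) 0 (J ((v ∘ σ) 0)))
        = B ((Function.update v (σ 0) (J (v (σ 0)))) ∘ σ) := by
          rw [show ((v ∘ σ) 0) = v (σ 0) from rfl, hfun]
      _ = _ := hBsymm σ _
  -- tuple decomposition
  have hv : ∀ v : Fin (n + 2) → V,
      Fin.cons (v 0) (Fin.cons (v 1) (fun i => v i.succ.succ)) = v := by
    intro v
    funext i
    refine Fin.cases ?_ (fun j => ?_) i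
    · simp
    · refine Fin.cases ?_ (fun k => ?_) j
      · rw [Fin.cons_succ, Fin.cons_zero, Fin.succ_zero_eq_one]
      · rw [Fin.cons_succ, Fin.cons_succ]
  -- the pivot property K
  have hK_of_P3 : (∀ (x y : V) (v : Fin n → V),
        B (Fin.cons (J x) (Fin.cons (J y) v)) = - B (Fin.cons x (Fin.cons y v))) →
      ∀ (x y : V) (m : Fin n → V),
        B (Fin.cons (J x) (Fin.cons y m)) = B (Fin.cons x (Fin.cons (J y) m)) := by
    intro h3 x y m
    have hy : J (-(J y)) = y := by rw [map_neg, hJ2, neg_neg]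
    calc B (Fin.cons (J x) (Fin.cons y m))
        = B (Fin.cons (J x) (Fin.cons (J (-(J y))) m)) := by rw [hy]
      _ = - B (Fin.cons x (Fin.cons (-(J y)) m)) := h3 x (-(J y)) m
      _ = B (Fin.cons x (Fin.cons (J y) m)) := by rw [hT1neg]; ring
  have hP3_of_K : (∀ (x y : V) (m : Fin n → V),
        B (Fin.cons (J x) (Fin.cons y m)) = B (Fin.cons x (Fin.cons (J y) m))) →
      ∀ (x y : V) (v : Fin n → V),
        B (Fin.cons (J x) (Fin.cons (J y) v)) = - B (Fin.cons x (Fin.cons y v)) := by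
    intro hk x y m
    rw [hk x (J y) m, hJ2, hT1neg]
  -- K implies the general slot-moving property
  have hDD : (∀ (x y : V) (m : Fin n → V),
        B (Fin.cons (J x) (Fin.cons y m)) = B (Fin.cons x (Fin.cons (J y) m))) →
      ∀ (j : Fin (n + 2)) (v : Fin (n + 2) → V),
        B (Function.update v j (J (v j))) = B (Function.update v 0 (J (v 0))) := by
    intro hk
    have hD1 : ∀ v : Fin (n + 2) → V,
        B (Function.update v 1 (J (v 1))) = B (Function.update v 0 (J (v 0))) := by
      intro v
      rw [← hv v, hcons1, Fin.cons_zero, hupd1, Fin.update_cons_zero]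
      exact (hk _ _ _).symm
    have hsym01 : ∀ u : Fin (n + 2) → V,
        B (Function.update (u ∘ (Equiv.swap (0 : Fin (n + 2)) 1)) 0
            (J ((u ∘ (Equiv.swap (0 : Fin (n + 2)) 1)) 0)))
          = B (Function.update u 0 (J (u 0))) := by
      intro u
      have hcu : u ∘ ⇑(Equiv.swap (0 : Fin (n + 2)) 1)
          = Fin.cons (u 1) (Fin.cons (u 0) (fun i => u i.succ.succ)) := by
        conv_lhs => rw [← hv u]
        exact hcomp _ _ _
      rw [hcu, Fin.cons_zero, Fin.update_cons_zero]
      conv_rhs => rw [← hv u]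
      rw [Fin.cons_zero, Fin.update_cons_zero]
      calc B (Fin.cons (J (u 1)) (Fin.cons (u 0) (fun i => u i.succ.succ)))
          = B (Fin.cons (u 1) (Fin.cons (J (u 0)) (fun i => u i.succ.succ))) := hk _ _ _
        _ = B (Fin.cons (J (u 0)) (Fin.cons (u 1) (fun i => u i.succ.succ))) := hswap _ _ _
    intro j v
    rcases eq_or_ne j 0 with hj0 | hj0
    · subst hj0; rfl
    rcases eq_or_ne j 1 with hj1 | hj1
    · subst hj1; exact hD1 v
    have e1 := L (Equiv.swap 0 j) v
    rw [Equiv.swap_apply_left] at e1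
    have e2 := L ((Equiv.swap (0 : Fin (n + 2)) 1).trans (Equiv.swap 0 j)) v
    have hσ0 : ((Equiv.swap (0 : Fin (n + 2)) 1).trans (Equiv.swap 0 j)) 0 = 1 := by
      rw [Equiv.trans_apply, Equiv.swap_apply_left,
        Equiv.swap_apply_of_ne_of_ne (by exact one_ne_zero) (Ne.symm hj1)]
    have hco : v ∘ ⇑((Equiv.swap (0 : Fin (n + 2)) 1).trans (Equiv.swap 0 j))
        = (v ∘ ⇑(Equiv.swap (0 : Fin (n + 2)) j)) ∘ ⇑(Equiv.swap (0 : Fin (n + 2)) 1) := rfl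
    rw [hσ0, hco] at e2
    calc B (Function.update v j (J (v j)))
        = B (Function.update (v ∘ ⇑(Equiv.swap (0 : Fin (n + 2)) j)) 0
            (J ((v ∘ ⇑(Equiv.swap (0 : Fin (n + 2)) j)) 0))) := e1.symm
      _ = B (Function.update ((v ∘ ⇑(Equiv.swap (0 : Fin (n + 2)) j))
            ∘ ⇑(Equiv.swap (0 : Fin (n + 2)) 1)) 0
            (J (((v ∘ ⇑(Equiv.swap (0 : Fin (n + 2)) j))
            ∘ ⇑(Equiv.swap (0 : Fin (n + 2)) 1)) 0)))
          := (hsym01 (v ∘ ⇑(Equiv.swap (0 : Fin (n + 2)) j))).symm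
      _ = B (Function.update v 1 (J (v 1))) := e2
      _ = B (Function.update v 0 (J (v 0))) := hD1 v
  have hP2_of_K : (∀ (x y : V) (m : Fin n → V),
        B (Fin.cons (J x) (Fin.cons y m)) = B (Fin.cons x (Fin.cons (J y) m))) →
      ∀ (σ : Equiv.Perm (Fin (n + 2))) (v : Fin (n + 2) → V),
        B (Function.update (v ∘ σ) 0 (J ((v ∘ σ) 0)))
          = B (Function.update v 0 (J (v 0))) := by
    intro hk σ v
    rw [L σ v]
    exact hDD hk (σ 0) v
  have hK_of_P2 : (∀ (σ : Equiv.Perm (Fin (n + 2))) (v : Fin (n + 2) → V),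
        B (Function.update (v ∘ σ) 0 (J ((v ∘ σ) 0)))
          = B (Function.update v 0 (J (v 0)))) →
      ∀ (x y : V) (m : Fin n → V),
        B (Fin.cons (J x) (Fin.cons y m)) = B (Fin.cons x (Fin.cons (J y) m)) := by
    intro h2 x y m
    have h := h2 (Equiv.swap 0 1) (Fin.cons x (Fin.cons y m))
    rw [L, Equiv.swap_apply_left, hcons1, hupd1, Fin.cons_zero, Fin.update_cons_zero] at h
    exact h.symm
  -- (3) → (1)
  have hP1_of_P3 : (∀ (x y : V) (v : Fin n → V),
        B (Fin.cons (J x) (Fin.cons (J y) v)) = - B (Fin.cons x (Fin.cons y v))) →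
      ∀ v : Fin n → V, ∑ i : Fin 2, B (Fin.cons (e i) (Fin.cons (e i) v)) = 0 := by
    intro h3 m
    rw [Fin.sum_univ_two]
    have h := h3 (e 0) (e 0) m
    rw [hJe0, MultilinearMap.cons_smul, hT1smul, smul_eq_mul] at h
    linear_combination h - B (Fin.cons (e 1) (Fin.cons (e 1) m)) * hε2
  -- (1) → (3)
  have hP3_of_P1 : (∀ v : Fin n → V,
        ∑ i : Fin 2, B (Fin.cons (e i) (Fin.cons (e i) v)) = 0) →
      ∀ (x y : V) (v : Fin n → V),
        B (Fin.cons (J x) (Fin.cons (J y) v)) = - B (Fin.cons x (Fin.cons y v)) := by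
    intro h1 x y m
    obtain ⟨a, b, hx⟩ : ∃ a b : ℝ, a • e 0 + b • e 1 = x := by
      have h := e.sum_repr' x
      rw [Fin.sum_univ_two] at h
      exact ⟨_, _, h⟩
    obtain ⟨c, d, hy⟩ : ∃ c d : ℝ, c • e 0 + d • e 1 = y := by
      have h := e.sum_repr' y
      rw [Fin.sum_univ_two] at h
      exact ⟨_, _, h⟩
    have hbil : ∀ (a b c d : ℝ),
        B (Fin.cons (a • e 0 + b • e 1) (Fin.cons (c • e 0 + d • e 1) m))
          = a * c * B (Fin.cons (e 0) (Fin.cons (e 0) m))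
            + a * d * B (Fin.cons (e 0) (Fin.cons (e 1) m))
            + b * c * B (Fin.cons (e 1) (Fin.cons (e 0) m))
            + b * d * B (Fin.cons (e 1) (Fin.cons (e 1) m)) := by
      intro a b c d
      rw [MultilinearMap.cons_add, MultilinearMap.cons_smul, MultilinearMap.cons_smul,
        hT1add, hT1add, hT1smul, hT1smul, hT1smul, hT1smul, smul_eq_mul, smul_eq_mul]
      ring
    have hJxv : J x = (-(b * ε)) • e 0 + (a * ε) • e 1 := by
      rw [← hx, map_add, map_smul, map_smul, hJe0, hJe1, smul_smul, smul_smul,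
        show b * -ε = -(b * ε) from by ring]
      exact add_comm _ _
    have hJyv : J y = (-(d * ε)) • e 0 + (c * ε) • e 1 := by
      rw [← hy, map_add, map_smul, map_smul, hJe0, hJe1, smul_smul, smul_smul,
        show d * -ε = -(d * ε) from by ring]
      exact add_comm _ _
    rw [hJxv, hJyv, hbil]
    conv_rhs => rw [← hx, ← hy, hbil]
    have h00 := h1 m
    rw [Fin.sum_univ_two] at h00
    have h10 : B (Fin.cons (e 1) (Fin.cons (e 0) m)) = B (Fin.cons (e 0) (Fin.cons (e 1) m)) :=
      hswap _ _ _
    linear_combination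
      (b * d * B (Fin.cons (e 0) (Fin.cons (e 0) m))
        - b * c * B (Fin.cons (e 0) (Fin.cons (e 1) m))
        - a * d * B (Fin.cons (e 1) (Fin.cons (e 0) m))
        + a * c * B (Fin.cons (e 1) (Fin.cons (e 1) m))) * hε2
      + (a * c + b * d) * h00
      + (b * c - a * d) * h10
  refine ⟨⟨fun h1 => hP2_of_K (hK_of_P3 (hP3_of_P1 h1)),
          fun h2 => hP1_of_P3 (hP3_of_K (hK_of_P2 h2))⟩,
         ⟨hP3_of_P1, hP1_of_P3⟩⟩
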